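/- arXiv:0908.4071 — 2 statements merged into one kernel-verified Lean document; each statement's English description precedes it below -/
import Mathlib

section
/- Let M be a totally unimodular matrix representing a regular matroid, Λ = ker(M) ∩ ℤ^E its lattice of integer flows with the Euclidean inner product. A nonzero α ∈ Λ is a simple flow if and only if for all nonzero β, γ ∈ Λ with α = β + γ one has ⟨β, γ⟩ < 0. -/
/-- An integer matrix is totally unimodular if every square submatrix has
determinant in `{-1, 0, 1}`. -/
def IsTU {m n : Type*} [Fintype m] [Fintype n] (M : Matrix m n ℤ) : Prop :=
  ∀ (k : ℕ) (f : Fin k → m) (g : Fin k → n),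
    (M.submatrix f g).det ∈ ({-1, 0, 1} : Set ℤ)

/-- A set of columns of `M` is dependent if the columns are linearly dependent over `ℚ`. -/
def ColDep {m n : Type*} [Fintype m] (M : Matrix m n ℤ) (C : Set n) : Prop :=
  ¬ LinearIndependent ℚ (fun j : C => fun i => (M i j : ℚ))

/-- A circuit of the column matroid of `M` is a minimal dependent set of columns. -/
def IsCircuit {m n : Type*} [Fintype m] (M : Matrix m n ℤ) (C : Set n) : Prop :=
  ColDep M C ∧ ∀ C' ⊂ C, ¬ ColDep M C'

/-- A simple flow of `M` is a nonzero integer vector in `ker M` with entries in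
`{-1,0,1}` whose support is a circuit of the column matroid of `M`. -/
def IsSimpleFlow {m n : Type*} [Fintype m] [Fintype n] (M : Matrix m n ℤ) (α : n → ℤ) : Prop :=
  α ≠ 0 ∧ M.mulVec α = 0 ∧ (∀ e, α e = -1 ∨ α e = 0 ∨ α e = 1) ∧
    IsCircuit M {e | α e ≠ 0}

open Matrix Set Finset Submodule Module

section Aux

variable {r m : ℕ}

private lemma sum_ext_aux (S : Set (Fin m)) [Fintype ↥S] (F : Fin m → ℚ)
    (hF : ∀ e, e ∉ S → F e = 0) : (∑ j : ↥S, F ↑j) = ∑ e, F e := by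
  rw [← Finset.sum_subtype S.toFinset (fun x => Set.mem_toFinset) F]
  exact Finset.sum_subset (Finset.subset_univ _)
    (fun e _ he => hF e (fun hs => he (Set.mem_toFinset.mpr hs)))

lemma colDep_iff (M : Matrix (Fin r) (Fin m) ℤ) (S : Set (Fin m)) :
    ColDep M S ↔ ∃ x : Fin m → ℚ, x ≠ 0 ∧ (∀ e, e ∉ S → x e = 0) ∧
      ∀ i, ∑ e, x e * (M i e : ℚ) = 0 := by
  classical
  unfold ColDep
  rw [Fintype.not_linearIndependent_iff]
  constructor
  · rintro ⟨g, hg0, j₀, hj₀⟩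
    set x : Fin m → ℚ := fun e => if h : e ∈ S then g ⟨e, h⟩ else 0 with hx
    have hxg : ∀ j : ↥S, x ↑j = g j := fun j => dif_pos j.2
    refine ⟨x, ?_, fun e he => dif_neg he, ?_⟩
    · intro h
      apply hj₀
      rw [← hxg j₀]
      simp [h]
    · intro i
      have h1 := congr_fun hg0 i
      simp only [Finset.sum_apply, Pi.zero_apply, Pi.smul_apply, smul_eq_mul] at h1
      rw [← sum_ext_aux S (fun e => x e * (M i e : ℚ))
        (fun e he => by rw [hx]; simp [he])]
      simpa [hxg] using h1
  · rintro ⟨x, hx0, hxs, hxk⟩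
    refine ⟨fun j => x ↑j, ?_, ?_⟩
    · funext i
      simp only [Finset.sum_apply, Pi.zero_apply, Pi.smul_apply, smul_eq_mul]
      rw [sum_ext_aux S (fun e => x e * (M i e : ℚ)) (fun e he => by simp [hxs e he])]
      exact hxk i
    · obtain ⟨e, he⟩ : ∃ e, x e ≠ 0 := by
        by_contra h
        push_neg at h
        exact hx0 (funext h)
      have heS : e ∈ S := by
        by_contra h
        exact he (hxs e h)
      exact ⟨⟨e, heS⟩, he⟩

lemma support_colDep (M : Matrix (Fin r) (Fin m) ℤ) (β : Fin m → ℤ) (hβ : β ≠ 0)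
    (hker : M.mulVec β = 0) : ColDep M {e | β e ≠ 0} := by
  rw [colDep_iff]
  refine ⟨fun e => (β e : ℚ), ?_, ?_, ?_⟩
  · intro h
    apply hβ
    funext e
    have := congr_fun h e
    simp only [Pi.zero_apply] at this
    exact_mod_cast this
  · intro e he
    have : β e = 0 := not_not.mp (by simpa using he)
    simp [this]
  · intro i
    have h1 := congr_fun hker i
    simp only [Matrix.mulVec, dotProduct, Pi.zero_apply] at h1
    have : ∑ e, (β e : ℚ) * (M i e : ℚ) = ((∑ e, M i e * β e : ℤ) : ℚ) := by
      push_cast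
      exact Finset.sum_congr rfl fun e _ => mul_comm _ _
    rw [this, h1]
    norm_num

lemma exists_circuit_subset (M : Matrix (Fin r) (Fin m) ℤ) :
    ∀ n (S : Set (Fin m)), S.ncard ≤ n → ColDep M S → ∃ C, C ⊆ S ∧ IsCircuit M C := by
  intro n
  induction n with
  | zero =>
    intro S hn h
    have hS : S = ∅ := by
      rw [← Set.ncard_eq_zero S.toFinite]
      omega
    subst hS
    exfalso
    haveI : IsEmpty ↥(∅ : Set (Fin m)) := by simp
    exact h linearIndependent_empty_type
  | succ n ih =>
    intro S hn h
    by_cases hmin : ∀ C' ⊂ S, ¬ ColDep M C'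
    · exact ⟨S, subset_rfl, h, hmin⟩
    · push_neg at hmin
      obtain ⟨C', hC'sub, hC'dep⟩ := hmin
      have hlt : C'.ncard < S.ncard := Set.ncard_lt_ncard hC'sub S.toFinite
      obtain ⟨C, hCsub, hC⟩ := ih C' (by omega) hC'dep
      exact ⟨C, hCsub.trans hC'sub.subset, hC⟩

end Aux

section Circuit

variable {r m : ℕ}

set_option synthInstance.maxHeartbeats 1000000 in
set_option maxHeartbeats 1000000 in
lemma circuit_simple (M : Matrix (Fin r) (Fin m) ℤ) (hTU : IsTU M) (C : Set (Fin m))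
    (hC : IsCircuit M C) : ∃ σ : Fin m → ℤ, IsSimpleFlow M σ ∧ {e | σ e ≠ 0} = C := by
  classical
  obtain ⟨x, hx0, hxs, hxk⟩ := (colDep_iff M C).mp hC.1
  -- every coordinate of x on C is nonzero
  have hxC : ∀ e ∈ C, x e ≠ 0 := by
    intro e he hxe
    refine hC.2 (C \ {e}) (Set.sdiff_singleton_ssubset.mpr he) ?_
    refine (colDep_iff M _).mpr ⟨x, hx0, ?_, hxk⟩
    intro e' he'
    rcases Classical.em (e' ∈ C) with h | h
    · have : e' = e := by
        by_contra hne
        exact he' ⟨h, hne⟩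
      rwa [this]
    · exact hxs e' h
  obtain ⟨e₀, he₀⟩ : C.Nonempty := by
    obtain ⟨e, he⟩ : ∃ e, x e ≠ 0 := by
      by_contra h; push_neg at h; exact hx0 (funext h)
    exact ⟨e, by_contra fun h => he (hxs e h)⟩
  -- normalize so that the value at e₀ is 1
  set c : ℚ := x e₀ with hc
  have hcne : c ≠ 0 := hxC e₀ he₀
  set y : Fin m → ℚ := fun e => x e / c with hy
  have hy0 : y e₀ = 1 := div_self hcne
  have hys : ∀ e, e ∉ C → y e = 0 := fun e he => by simp [hy, hxs e he]
  have hyC : ∀ e ∈ C, y e ≠ 0 := fun e he => div_ne_zero (hxC e he) hcne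
  have hyk : ∀ i, ∑ e, y e * (M i e : ℚ) = 0 := by
    intro i
    have : ∑ e, y e * (M i e : ℚ) = (∑ e, x e * (M i e : ℚ)) / c := by
      rw [Finset.sum_div]
      exact Finset.sum_congr rfl fun e _ => by rw [hy]; ring
    rw [this, hxk i, zero_div]
  -- the set D = C \ {e₀} is independent
  set D : Set (Fin m) := C \ {e₀} with hD
  have hDind : LinearIndependent ℚ (fun j : D => fun i => (M i j : ℚ)) :=
    not_not.mp (hC.2 D (Set.sdiff_singleton_ssubset.mpr he₀))
  set d : ℕ := Fintype.card ↥D with hd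
  set eqD : ↥D ≃ Fin d := Fintype.equivFin ↥D with heqD
  set emb : Fin d → Fin m := fun k => ↑(eqD.symm k) with hemb
  have hembD : ∀ k, emb k ∈ D := fun k => (eqD.symm k).2
  have hembne : ∀ k, emb k ≠ e₀ := fun k => (hembD k).2
  have hembC : ∀ k, emb k ∈ C := fun k => (hembD k).1
  -- the rational matrix of the columns of D
  set A : Matrix (Fin r) (Fin d) ℚ := fun i k => (M i (emb k) : ℚ) with hA
  have hAcols : LinearIndependent ℚ (fun k => Aᵀ k) := by
    have := hDind.comp eqD.symm eqD.symm.injective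
    exact this
  -- the rows of A span a space of dimension d
  have hrankT : Aᵀ.rank = d := by
    have h := LinearIndependent.rank_matrix (R := ℚ) (M := Aᵀ) hAcols
    rwa [Fintype.card_fin] at h
  have hrank : A.rank = d := by rw [← Matrix.rank_transpose]; exact hrankT
  have hspan : finrank ℚ (span ℚ (Set.range A)) = d := by
    rw [Matrix.rank_eq_finrank_span_row] at hrank; exact hrank
  -- select d linearly independent rows
  obtain ⟨b, hb₁, hb₂, hb₃⟩ := exists_linearIndependent ℚ (Set.range A)
  have hbfin : b.Finite := (Set.finite_range A).subset hb₁
  haveI : Fintype ↥b := hbfin.fintype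
  have hbcard : Fintype.card ↥b = d := by
    have h1 := finrank_span_set_eq_card hb₃
    rw [hb₂, hspan] at h1
    rw [← Set.toFinset_card]
    omega
  set eb : Fin d ≃ ↥b := (Fintype.equivFinOfCardEq hbcard).symm with heb
  have hmem : ∀ v : ↥b, (v : Fin d → ℚ) ∈ Set.range A := fun v => hb₁ v.2
  set R : Fin d → Fin r := fun k => (hmem (eb k)).choose with hR
  have hRspec : ∀ k, A (R k) = ↑(eb k) := fun k => (hmem (eb k)).choose_spec
  -- B, the selected square submatrix, is invertible over ℚ
  set B : Matrix (Fin d) (Fin d) ℚ := A.submatrix R id with hB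
  have hBrows : LinearIndependent ℚ (fun k => B k) := by
    have h1 : LinearIndependent ℚ (fun k : Fin d => ((eb k : Fin d → ℚ))) :=
      hb₃.comp eb eb.injective
    have h2 : (fun k => B k) = fun k : Fin d => ((eb k : Fin d → ℚ)) := by
      funext k
      exact hRspec k
    rwa [h2]
  have hBunit : IsUnit B := Matrix.linearIndependent_rows_iff_isUnit.mp hBrows
  have hBdet : IsUnit B.det := (Matrix.isUnit_iff_isUnit_det B).mp hBunit
  -- the kernel equation restricted to the rows R
  set w : Fin d → ℚ := fun k => y (emb k) with hw
  have hAw : ∀ i : Fin r, ∑ k, w k * A i k = -(M i e₀ : ℚ) := by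
    intro i
    set y' : Fin m → ℚ := fun e => if e = e₀ then 0 else y e with hy'
    have hy's : ∀ e, e ∉ D → y' e = 0 := by
      intro e he
      by_cases h : e = e₀
      · simp [hy', h]
      · have : e ∉ C := fun hc => he ⟨hc, h⟩
        simp [hy', h, hys e this]
    have hsplit : ∀ e, y e * (M i e : ℚ) =
        y' e * (M i e : ℚ) + (if e = e₀ then y e₀ * (M i e₀ : ℚ) else 0) := by
      intro e
      by_cases h : e = e₀ <;> simp [hy', h]
    have h1 : (0 : ℚ) = (∑ e, y' e * (M i e : ℚ)) + y e₀ * (M i e₀ : ℚ) := by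
      rw [← hyk i]
      rw [Finset.sum_congr rfl fun e _ => hsplit e, Finset.sum_add_distrib]
      congr 1
      simp
    have h2 : ∑ e, y' e * (M i e : ℚ) = ∑ k, w k * A i k := by
      rw [← sum_ext_aux D (fun e => y' e * (M i e : ℚ)) (fun e he => by simp [hy's e he])]
      rw [← Equiv.sum_comp eqD.symm (fun j : ↥D => y' ↑j * (M i (↑j : Fin m) : ℚ))]
      refine Finset.sum_congr rfl fun k _ => ?_
      have : y' (emb k) = y (emb k) := if_neg (hembne k)
      rw [hA, hw]
      simp only [hemb] at this ⊢
      rw [this]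
    rw [← h2]
    rw [hy0] at h1
    linarith [h1]
  set cvec : Fin d → ℚ := fun k => -(M (R k) e₀ : ℚ) with hcvec
  have hBw : B.mulVec w = cvec := by
    funext k
    have h3 := hAw (R k)
    show ∑ j, B k j * w j = cvec k
    rw [show ∑ j, B k j * w j = ∑ j, w j * A (R k) j from
      Finset.sum_congr rfl fun j _ => mul_comm _ _]
    rw [h3]
  haveI : Invertible B := B.invertibleOfIsUnitDet hBdet
  have hdw : B.det • w = Matrix.cramer B cvec := by
    apply Matrix.mulVec_injective_of_invertible B
    rw [Matrix.mulVec_smul, hBw, Matrix.mulVec_cramer]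
  -- determinant of B is ±1
  have hBcast : B = (M.submatrix R emb).map (Int.cast : ℤ → ℚ) := by
    ext i j
    rfl
  have hBdetZ : B.det = ((M.submatrix R emb).det : ℚ) := by
    rw [hBcast]
    exact ((Int.castRingHom ℚ).map_det (M.submatrix R emb)).symm
  have hTUB := hTU d R emb
  simp only [Set.mem_insert_iff, Set.mem_singleton_iff] at hTUB
  have hBpm : (M.submatrix R emb).det = 1 ∨ (M.submatrix R emb).det = -1 := by
    rcases hTUB with h | h | h
    · right; exact h
    · exfalso
      have : B.det = 0 := by rw [hBdetZ, h]; norm_num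
      exact hBdet.ne_zero this
    · left; exact h
  -- each entry of w is ±1
  have hwpm : ∀ k, w k = 1 ∨ w k = -1 := by
    intro k
    have h4 : B.det * w k = (B.updateCol k cvec).det := by
      have := congr_fun hdw k
      simpa [Matrix.cramer_apply] using this
    -- the updated matrix is a submatrix of M up to sign
    set g : Fin d → Fin m := fun j => if j = k then e₀ else emb j with hg
    have h5 : B.updateCol k (fun j => (M (R j) e₀ : ℚ)) =
        ((M.submatrix R g).map (Int.cast : ℤ → ℚ)) := by
      ext i j
      rw [Matrix.updateCol_apply]
      by_cases h : j = k <;> simp [h, hg, hB, hA] <;> rfl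
    have h6 : (B.updateCol k cvec).det = -((M.submatrix R g).det : ℚ) := by
      have hneg : cvec = (-1 : ℚ) • (fun j => (M (R j) e₀ : ℚ)) := by
        funext j; simp [hcvec]
      rw [hneg, Matrix.det_updateCol_smul, h5]
      have hmd := (Int.castRingHom ℚ).map_det (M.submatrix R g)
      rw [RingHom.mapMatrix_apply] at hmd
      simp only [Int.coe_castRingHom] at hmd
      rw [← hmd]

      ring
    have hTUg := hTU d R g
    simp only [Set.mem_insert_iff, Set.mem_singleton_iff] at hTUg
    have hwne : w k ≠ 0 := hyC (emb k) (hembC k)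
    rcases hBpm with hB1 | hB1 <;> rw [hBdetZ, hB1] at h4 <;>
      rcases hTUg with h | h | h <;> rw [h] at h6 <;> rw [h6] at h4 <;>
      push_cast at h4 <;>
      [skip; skip; skip; skip; skip; skip] <;>
      first
        | (left; linarith)
        | (right; linarith)
        | (exfalso; apply hwne; linarith)
  have hyCpm : ∀ e ∈ C, y e = 1 ∨ y e = -1 := by
    intro e he
    by_cases h : e = e₀
    · left; rw [h, hy0]
    · have heD : e ∈ D := ⟨he, h⟩
      have hee : emb (eqD ⟨e, heD⟩) = e := by simp [hemb]
      have hw' := hwpm (eqD ⟨e, heD⟩)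
      simp only [hw, hemb, Equiv.symm_apply_apply] at hw'
      exact hw'
  set σ : Fin m → ℤ := fun e => if y e = 1 then 1 else if y e = -1 then -1 else 0 with hσ
  have hcast : ∀ e, (σ e : ℚ) = y e := by
    intro e
    by_cases h : e ∈ C
    · rcases hyCpm e h with h1 | h1 <;> norm_num [hσ, h1]
    · have h1 := hys e h
      rw [hσ]
      norm_num [h1]
  have hsupp : {e | σ e ≠ 0} = C := by
    ext e
    simp only [Set.mem_setOf_eq]
    constructor
    · intro h
      by_contra hc
      apply h
      have h2 := hcast e
      rw [hys e hc] at h2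
      exact_mod_cast h2
    · intro h hz
      apply hyC e h
      rw [← hcast e, hz]
      norm_num
  refine ⟨σ, ⟨?_, ?_, ?_, ?_⟩, hsupp⟩
  · intro h
    have h1 := congr_fun h e₀
    simp only [Pi.zero_apply] at h1
    have h2 := hcast e₀
    rw [h1, hy0] at h2
    norm_num at h2
  · funext i
    have h1 : ((M.mulVec σ) i : ℚ) = ∑ e, y e * (M i e : ℚ) := by
      simp only [Matrix.mulVec, dotProduct]
      push_cast
      exact Finset.sum_congr rfl fun e _ => by rw [hcast e]; ring
    rw [hyk i] at h1
    exact_mod_cast h1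
  · intro e
    by_cases h1 : y e = 1
    · right; right; simp [hσ, h1]
    · by_cases h2 : y e = -1
      · left; rw [hσ]; norm_num [h1, h2]
      · right; left; rw [hσ]; norm_num [h1, h2]
  · rw [hsupp]; exact hC

end Circuit

section Conformal

variable {r m : ℕ}

private lemma neg_simple (M : Matrix (Fin r) (Fin m) ℤ) (σ : Fin m → ℤ)
    (h : IsSimpleFlow M σ) : IsSimpleFlow M (-σ) := by
  obtain ⟨h0, hk, hpm, hc⟩ := h
  refine ⟨neg_ne_zero.mpr h0, ?_, ?_, ?_⟩
  · rw [Matrix.mulVec_neg, hk, neg_zero]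
  · intro e
    rcases hpm e with h | h | h <;> simp [h]
  · have : {e | (-σ) e ≠ 0} = {e | σ e ≠ 0} := by
      ext e; simp
    rwa [this]

private lemma step_facts (a s k : ℤ) (hs : s = -1 ∨ s = 0 ∨ s = 1) (hs0 : a = 0 → s = 0)
    (h1 : 1 ≤ k) (hP : 0 < s * a → k ≤ |a|) :
    (a = 0 → a - k * s = 0) ∧ 0 ≤ (a - k * s) * a ∧ (s * a < 0 → 0 < (a - k * s) * a) ∧
      (0 < s * a → k = |a| → a - k * s = 0) := by
  rcases eq_or_ne a 0 with ha | ha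
  · have h0 := hs0 ha
    subst h0; subst ha
    norm_num
  · rcases lt_trichotomy a 0 with hlt | h0 | hgt
    · rcases hs with h | h | h <;> subst h
      · have h2 : k ≤ -a := by
          have h3 := hP (by nlinarith)
          rwa [abs_of_neg hlt] at h3
        refine ⟨by omega, by nlinarith, by intro hc; nlinarith, ?_⟩
        intro _ hk2
        rw [abs_of_neg hlt] at hk2
        omega
      · exact ⟨by omega, by nlinarith, by intro hc; nlinarith, by intro hc; nlinarith⟩
      · refine ⟨by omega, by nlinarith, by intro _; nlinarith, ?_⟩
        intro hc
        exfalso; nlinarith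
    · exact absurd h0 ha
    · rcases hs with h | h | h <;> subst h
      · refine ⟨by omega, by nlinarith, by intro _; nlinarith, ?_⟩
        intro hc
        exfalso; nlinarith
      · exact ⟨by omega, by nlinarith, by intro hc; nlinarith, by intro hc; nlinarith⟩
      · have h2 : k ≤ a := by
          have h3 := hP (by nlinarith)
          rwa [abs_of_pos hgt] at h3
        refine ⟨by omega, by nlinarith, by intro hc; nlinarith, ?_⟩
        intro _ hk2
        rw [abs_of_pos hgt] at hk2
        omega

private lemma sign_trans (a b c : ℤ) (h1 : 0 < a * b) (h2 : 0 < b * c) : 0 < a * c := by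
  nlinarith [mul_pos h1 h2, mul_self_nonneg b]

lemma exists_conformal (M : Matrix (Fin r) (Fin m) ℤ) (hTU : IsTU M) :
    ∀ n (α : Fin m → ℤ), {e | α e ≠ 0}.ncard ≤ n → α ≠ 0 → M.mulVec α = 0 →
      ∃ σ, IsSimpleFlow M σ ∧ ∀ e, σ e ≠ 0 → 0 < σ e * α e := by
  intro n
  induction n with
  | zero =>
    intro α hn hα hker
    exfalso
    obtain ⟨e, he⟩ : ∃ e, α e ≠ 0 := by
      by_contra h; push_neg at h; exact hα (funext h)
    have h1 : {e | α e ≠ 0}.Nonempty := ⟨e, he⟩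
    have h2 : {e | α e ≠ 0}.ncard = 0 := by omega
    rw [Set.ncard_eq_zero ({e | α e ≠ 0}.toFinite)] at h2
    rw [h2] at h1
    exact Set.not_nonempty_empty h1
  | succ n ih =>
    intro α hn hα hker
    obtain ⟨C, hCsub, hC⟩ := exists_circuit_subset M ({e | α e ≠ 0}.ncard) {e | α e ≠ 0}
      le_rfl (support_colDep M α hα hker)
    obtain ⟨σ₀, hσ₀, hsupp₀⟩ := circuit_simple M hTU C hC
    obtain ⟨e₁, he₁⟩ : ∃ e, σ₀ e ≠ 0 := by
      by_contra h; push_neg at h; exact hσ₀.1 (funext h)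
    have he₁C : e₁ ∈ C := hsupp₀ ▸ he₁
    have hαe₁ : α e₁ ≠ 0 := hCsub he₁C
    obtain ⟨σ₁, hσ₁, hsupp₁, hpos₁⟩ :
        ∃ σ₁, IsSimpleFlow M σ₁ ∧ {e | σ₁ e ≠ 0} = C ∧ 0 < σ₁ e₁ * α e₁ := by
      rcases lt_trichotomy (σ₀ e₁ * α e₁) 0 with hlt | heq | hgt
      · refine ⟨-σ₀, neg_simple M σ₀ hσ₀, ?_, by simp; nlinarith⟩
        rw [← hsupp₀]; ext e; simp
      · exact absurd heq (mul_ne_zero he₁ hαe₁)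
      · exact ⟨σ₀, hσ₀, hsupp₀, hgt⟩
    by_cases hconf : ∀ e, σ₁ e ≠ 0 → 0 < σ₁ e * α e
    · exact ⟨σ₁, hσ₁, hconf⟩
    · push_neg at hconf
      obtain ⟨e₂, he₂, he₂le⟩ := hconf
      have he₂C : e₂ ∈ C := hsupp₁ ▸ he₂
      have hαe₂ : α e₂ ≠ 0 := hCsub he₂C
      have he₂lt : σ₁ e₂ * α e₂ < 0 :=
        lt_of_le_of_ne he₂le (mul_ne_zero he₂ hαe₂)
      set P : Finset (Fin m) := Finset.univ.filter (fun e => 0 < σ₁ e * α e) with hP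
      have hPne : P.Nonempty := ⟨e₁, by simp [hP, hpos₁]⟩
      obtain ⟨estar, hestar, hmin⟩ := Finset.exists_min_image P (fun e => |α e|) hPne
      have hestar' : 0 < σ₁ estar * α estar := by
        simpa [hP] using hestar
      have hαest : α estar ≠ 0 := by
        intro h0; rw [h0] at hestar'; simp at hestar'
      set k : ℤ := |α estar| with hk
      have hk1 : 1 ≤ k := Int.one_le_abs hαest
      set α' : Fin m → ℤ := fun e => α e - k * σ₁ e with hα'
      have hσpm : ∀ e, σ₁ e = -1 ∨ σ₁ e = 0 ∨ σ₁ e = 1 := hσ₁.2.2.1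
      have key : ∀ e, (α e = 0 → α' e = 0) ∧ 0 ≤ α' e * α e ∧
          (σ₁ e * α e < 0 → 0 < α' e * α e) ∧
          (0 < σ₁ e * α e → k = |α e| → α' e = 0) := by
        intro e
        apply step_facts (α e) (σ₁ e) k (hσpm e)
        · intro h0
          by_contra hne
          have : e ∈ C := hsupp₁ ▸ hne
          exact (hCsub this) h0
        · exact hk1
        · intro hpe
          exact hmin e (by simp [hP, hpe])
      have hstar0 : α' estar = 0 := (key estar).2.2.2 hestar' rfl
      have hsupp' : {e | α' e ≠ 0} ⊆ {e | α e ≠ 0} \ {estar} := by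
        intro e he
        simp only [Set.mem_setOf_eq] at he
        constructor
        · simp only [Set.mem_setOf_eq]
          intro h0
          exact he ((key e).1 h0)
        · intro h0
          simp only [Set.mem_singleton_iff] at h0
          rw [h0] at he
          exact he hstar0
      have hestmem : estar ∈ {e | α e ≠ 0} := hαest
      have hncard : {e | α' e ≠ 0}.ncard ≤ n := by
        have h1 : {e | α' e ≠ 0}.ncard ≤ ({e | α e ≠ 0} \ {estar}).ncard :=
          Set.ncard_le_ncard hsupp' (({e | α e ≠ 0}).toFinite.diff)
        have h2 : ({e | α e ≠ 0} \ {estar}).ncard < {e | α e ≠ 0}.ncard :=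
          Set.ncard_lt_ncard (Set.sdiff_singleton_ssubset.mpr hestmem)
            ({e | α e ≠ 0}).toFinite
        omega
      have hα'0 : α' ≠ 0 := by
        intro h0
        have h1 := (key e₂).2.2.1 he₂lt
        rw [congr_fun h0 e₂] at h1
        simp at h1
      have hker' : M.mulVec α' = 0 := by
        have heq : α' = α - (k • σ₁) := by
          funext e
          simp [hα', Pi.smul_apply, smul_eq_mul]
        rw [heq, Matrix.mulVec_sub, Matrix.mulVec_smul, hker, hσ₁.2.1]
        simp
      obtain ⟨σ', hσ', hconf'⟩ := ih α' hncard hα'0 hker'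
      refine ⟨σ', hσ', fun e he => ?_⟩
      have h1 := hconf' e he
      have h3 : α' e ≠ 0 := by
        intro h0; rw [h0] at h1; simp at h1
      have h4 : α e ≠ 0 := by
        intro h0
        exact h3 ((key e).1 h0)
      have h5 : 0 < α' e * α e :=
        lt_of_le_of_ne (key e).2.1 (Ne.symm (mul_ne_zero h3 h4))
      exact sign_trans (σ' e) (α' e) (α e) h1 h5

end Conformal

section Main

variable {r m : ℕ}

private lemma abs_le_sq (b : ℤ) : |b| ≤ b * b := by
  rcases eq_or_ne b 0 with h | h
  · simp [h]
  · have h1 : 1 ≤ |b| := Int.one_le_abs h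
    calc |b| = 1 * |b| := (one_mul _).symm
    _ ≤ |b| * |b| := mul_le_mul_of_nonneg_right h1 (abs_nonneg b)
    _ = b * b := abs_mul_abs_self b

private lemma term_nonpos (a b : ℤ) (ha : a = -1 ∨ a = 0 ∨ a = 1) : b * (a - b) ≤ 0 := by
  have h1 : a * b ≤ |b| := by
    calc a * b ≤ |a * b| := le_abs_self _
    _ = |a| * |b| := abs_mul a b
    _ ≤ 1 * |b| := by
        apply mul_le_mul_of_nonneg_right _ (abs_nonneg b)
        rcases ha with h | h | h <;> simp [h]
    _ = |b| := one_mul _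
  have h2 := abs_le_sq b
  nlinarith

/-- Metric characterization of simple flows: a nonzero `α ∈ ker M ∩ ℤ^E` is a simple
flow iff for every decomposition `α = β + γ` into nonzero flows, `⟨β, γ⟩ < 0`. -/
theorem stmt8 {r m : ℕ} (M : Matrix (Fin r) (Fin m) ℤ) (hTU : IsTU M)
    (α : Fin m → ℤ) (hα : α ≠ 0) (hker : M.mulVec α = 0) :
    IsSimpleFlow M α ↔
      ∀ β γ : Fin m → ℤ, M.mulVec β = 0 → M.mulVec γ = 0 → β ≠ 0 → γ ≠ 0 →
        α = β + γ → ∑ e, β e * γ e < 0 := by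
  constructor
  · rintro ⟨-, -, hpm, hcirc⟩ β γ hβk hγk hβ0 hγ0 hdecomp
    have hγe : ∀ e, γ e = α e - β e := by
      intro e
      have := congr_fun hdecomp e
      simp only [Pi.add_apply] at this
      omega
    have hterm : ∀ e, β e * γ e ≤ 0 := by
      intro e
      rw [hγe e]
      exact term_nonpos (α e) (β e) (hpm e)
    have hle : ∑ e, β e * γ e ≤ 0 := Finset.sum_nonpos fun e _ => hterm e
    have hne : ∑ e, β e * γ e ≠ 0 := by
      intro h0
      have hall : ∀ e, β e * γ e = 0 := by
        intro e
        exact (Finset.sum_eq_zero_iff_of_nonpos (fun e _ => hterm e)).mp h0 e (Finset.mem_univ e)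
      have hor : ∀ e, β e = 0 ∨ β e = α e := by
        intro e
        rcases mul_eq_zero.mp (hall e) with h | h
        · exact Or.inl h
        · right
          rw [hγe e] at h
          omega
      set S : Set (Fin m) := {e | β e ≠ 0} with hS
      have hSC : S ⊆ {e | α e ≠ 0} := by
        intro e he
        simp only [hS, Set.mem_setOf_eq] at he ⊢
        rcases hor e with h | h
        · exact absurd h he
        · rw [← h]; exact he
      rcases eq_or_ne S {e | α e ≠ 0} with hSeq | hSne
      · apply hγ0
        funext e
        rw [hγe e]
        simp only [Pi.zero_apply]
        rcases hor e with h | h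
        · have : e ∉ S := by simp [hS, h]
          rw [hSeq] at this
          simp only [Set.mem_setOf_eq, not_not] at this
          omega
        · omega
      · exact hcirc.2 S (ssubset_of_subset_of_ne hSC hSne) (support_colDep M β hβ0 hβk)
    exact lt_of_le_of_ne hle hne
  · intro h
    by_contra hns
    obtain ⟨σ, hσ, hconf⟩ := exists_conformal M hTU ({e | α e ≠ 0}.ncard) α le_rfl hα hker
    have hne : α ≠ σ := fun he => hns (he ▸ hσ)
    set γ : Fin m → ℤ := fun e => α e - σ e with hγ
    have hγ0 : γ ≠ 0 := by
      intro h0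
      apply hne
      funext e
      have := congr_fun h0 e
      simp only [hγ, Pi.zero_apply] at this
      omega
    have hγk : M.mulVec γ = 0 := by
      have heq : γ = α - σ := by funext e; simp [hγ]
      rw [heq, Matrix.mulVec_sub, hker, hσ.2.1]
      simp
    have hdecomp : α = σ + γ := by
      funext e
      simp [hγ]
    have hlt := h σ γ hσ.2.1 hγk hσ.1 hγ0 hdecomp
    have hge : 0 ≤ ∑ e, σ e * γ e := by
      apply Finset.sum_nonneg
      intro e _
      simp only [hγ]
      rcases hσ.2.2.1 e with hh | hh | hh
      · have h1 : 0 < σ e * α e := hconf e (by rw [hh]; norm_num)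
        rw [hh] at h1 ⊢
        nlinarith
      · simp [hh]
      · have h1 : 0 < σ e * α e := hconf e (by rw [hh]; norm_num)
        rw [hh] at h1 ⊢
        nlinarith
    exact absurd hlt (not_lt.mpr hge)

end Main
end

section
/- Let U be a totally unimodular matrix and A = UᵀU. Then A is g-nonnegative: for every nonempty S ⊆ [s], g_A(S) = Σ_{S ⊆ S' ⊆ [s]} (-1)^{|S'\S|} f_A(S') ≥ 0. -/
set_option linter.unusedSectionVars false
set_option linter.unusedVariables false
set_option linter.unreachableTactic false
set_option linter.unusedTactic false
set_option maxHeartbeats 1000000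

open scoped Classical in
/-- `f_A(S)`: zero if `S` is empty or contains a negative triple; `a_{ii}` if `S = {i}`;
otherwise the minimum of `|a_{ij}|` over distinct pairs in `S`. -/
noncomputable def fA {s : ℕ} (A : Matrix (Fin s) (Fin s) ℤ) (S : Finset (Fin s)) : ℤ :=
  if ∃ h ∈ S, ∃ i ∈ S, ∃ j ∈ S, h ≠ i ∧ i ≠ j ∧ h ≠ j ∧ A h i * A i j * A j h < 0 then 0
  else if hS : S.card ≤ 1 then ∑ i ∈ S, A i i
  else S.offDiag.inf'
    (Finset.card_pos.mp (by
      rw [Finset.offDiag_card]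
      have h2 : 2 ≤ S.card := by omega
      exact Nat.sub_pos_of_lt (by nlinarith)))
    fun p => |A p.1 p.2|

/-- `g_A(S) = ∑_{S ⊆ S'} (-1)^{|S' \ S|} f_A(S')`. -/
noncomputable def gA {s : ℕ} (A : Matrix (Fin s) (Fin s) ℤ) (S : Finset (Fin s)) : ℤ :=
  ∑ S' ∈ Finset.univ.powerset.filter (fun S' => S ⊆ S'), (-1) ^ (S' \ S).card * fA A S'

section Aux
open Finset
variable {E : Type*} [Fintype E] {s : ℕ} {U : Matrix E (Fin s) ℤ}
open scoped Classical

lemma entry_cases (hTU : IsTU U) (e : E) (i : Fin s) :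
    U e i = -1 ∨ U e i = 0 ∨ U e i = 1 := by
  have h := hTU 1 (fun _ => e) (fun _ => i)
  simpa [Matrix.det_fin_one, Matrix.submatrix] using h

lemma sq_one (hTU : IsTU U) {e : E} {i : Fin s} (h : U e i ≠ 0) : U e i * U e i = 1 := by
  rcases entry_cases hTU e i with h1 | h1 | h1 <;> simp_all

lemma two_by_two (hTU : IsTU U) {e f : E} {i j : Fin s}
    (h1 : U e i ≠ 0) (h2 : U e j ≠ 0) (h3 : U f i ≠ 0) (h4 : U f j ≠ 0) :
    U e i * U e j = U f i * U f j := by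
  have h := hTU 2 ![e, f] ![i, j]
  simp only [Matrix.det_fin_two, Matrix.submatrix_apply] at h
  simp only [Matrix.cons_val_zero, Matrix.cons_val_one, Matrix.head_cons,
    Set.mem_insert_iff, Set.mem_singleton_iff] at h
  rcases entry_cases hTU e i with a | a | a <;>
  rcases entry_cases hTU e j with b | b | b <;>
  rcases entry_cases hTU f i with c | c | c <;>
  rcases entry_cases hTU f j with d | d | d <;>
  simp_all

lemma A_apply (i j : Fin s) : (U.transpose * U) i j = ∑ e, U e i * U e j := by
  simp [Matrix.mul_apply, Matrix.transpose_apply]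

lemma A_symm (i j : Fin s) : (U.transpose * U) j i = (U.transpose * U) i j := by
  simp only [A_apply]; exact Finset.sum_congr rfl fun e _ => mul_comm _ _

lemma A_diag (hTU : IsTU U) (i : Fin s) :
    (U.transpose * U) i i = ((univ.filter fun e => U e i ≠ 0).card : ℤ) := by
  rw [A_apply]
  calc ∑ e, U e i * U e i = ∑ e, (if U e i ≠ 0 then (1:ℤ) else 0) :=
        Finset.sum_congr rfl fun e _ => by
          by_cases h : U e i = 0 <;> simp [h, sq_one hTU]
    _ = _ := by rw [Finset.sum_boole]

lemma A_off (hTU : IsTU U) {i j : Fin s} {e : E} (hei : U e i ≠ 0) (hej : U e j ≠ 0) :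
    (U.transpose * U) i j
      = (U e i * U e j) * ((univ.filter fun f => U f i ≠ 0 ∧ U f j ≠ 0).card : ℤ) := by
  rw [A_apply]
  calc ∑ f, U f i * U f j
      = ∑ f, (if U f i ≠ 0 ∧ U f j ≠ 0 then U e i * U e j else 0) :=
        Finset.sum_congr rfl fun f _ => by
          by_cases h1 : U f i = 0
          · simp [h1]
          · by_cases h2 : U f j = 0
            · simp [h1, h2]
            · simp only [h1, h2, ne_eq, not_false_iff, and_self, if_true]
              exact two_by_two hTU h1 h2 hei hej
    _ = _ := by rw [Finset.sum_ite, Finset.sum_const, Finset.sum_const_zero, add_zero,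
          nsmul_eq_mul, mul_comm]

lemma abs_A_off (hTU : IsTU U) (i j : Fin s) :
    |(U.transpose * U) i j|
      = ((univ.filter fun f => U f i ≠ 0 ∧ U f j ≠ 0).card : ℤ) := by
  by_cases hne : ∃ e, U e i ≠ 0 ∧ U e j ≠ 0
  · obtain ⟨e, hei, hej⟩ := hne
    rw [A_off hTU hei hej, abs_mul]
    have h1 : |U e i * U e j| = 1 := by
      rcases entry_cases hTU e i with a | a | a <;>
      rcases entry_cases hTU e j with b | b | b <;> simp_all
    rw [h1, one_mul, abs_of_nonneg (by positivity)]
  · push_neg at hne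
    have hempty : (univ.filter fun f : E => U f i ≠ 0 ∧ U f j ≠ 0) = ∅ := by
      ext f; simp only [mem_filter, mem_univ, true_and, notMem_empty, iff_false]
      intro ⟨h1, h2⟩; exact h2 (hne f h1)
    rw [hempty, A_apply]
    have : ∀ f ∈ univ, U f i * U f j = (0:ℤ) := fun f _ => by
      by_cases h : U f i = 0
      · rw [h, zero_mul]
      · rw [hne f h, mul_zero]
    rw [Finset.sum_congr rfl this]; simp

lemma three_by_three (hTU : IsTU U) {e1 e2 e3 : E} {i j k : Fin s}
    (h1i : U e1 i ≠ 0) (h1j : U e1 j ≠ 0) (h1k : U e1 k = 0)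
    (h2i : U e2 i = 0) (h2j : U e2 j ≠ 0) (h2k : U e2 k ≠ 0)
    (h3i : U e3 i ≠ 0) (h3j : U e3 j = 0) (h3k : U e3 k ≠ 0) :
    (U e1 i * U e1 j) * (U e2 j * U e2 k) * (U e3 i * U e3 k) = -1 := by
  have h := hTU 3 ![e1, e2, e3] ![i, j, k]
  simp only [Matrix.det_fin_three, Matrix.submatrix_apply] at h
  simp only [Matrix.cons_val_zero, Matrix.cons_val_one, Matrix.head_cons,
    Matrix.cons_val_two, Matrix.tail_cons, Set.mem_insert_iff, Set.mem_singleton_iff] at h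
  rcases entry_cases hTU e1 i with a | a | a <;>
  rcases entry_cases hTU e1 j with b | b | b <;>
  rcases entry_cases hTU e2 j with c | c | c <;>
  rcases entry_cases hTU e2 k with d | d | d <;>
  rcases entry_cases hTU e3 i with x | x | x <;>
  rcases entry_cases hTU e3 k with y | y | y <;>
  simp_all

lemma triple_cover (hTU : IsTU U) {i j k : Fin s}
    (hpos : 0 ≤ (U.transpose * U) i j * (U.transpose * U) j k * (U.transpose * U) k i) :
    (∀ e, U e i ≠ 0 → U e j ≠ 0 → U e k ≠ 0) ∨
    (∀ e, U e j ≠ 0 → U e k ≠ 0 → U e i ≠ 0) ∨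
    (∀ e, U e i ≠ 0 → U e k ≠ 0 → U e j ≠ 0) := by
  by_contra hc
  push_neg at hc
  obtain ⟨⟨e1, h1i, h1j, h1k⟩, ⟨e2, h2j, h2k, h2i⟩, ⟨e3, h3i, h3k, h3j⟩⟩ := hc
  have key := three_by_three hTU h1i h1j h1k h2i h2j h2k h3i h3j h3k
  have hij := A_off hTU h1i h1j
  have hjk := A_off hTU h2j h2k
  have hki : (U.transpose * U) k i
      = (U e3 i * U e3 k) * ((univ.filter fun f => U f i ≠ 0 ∧ U f k ≠ 0).card : ℤ) := by
    rw [A_symm]; exact A_off hTU h3i h3k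
  have c1 : (0:ℤ) < ((univ.filter fun f => U f i ≠ 0 ∧ U f j ≠ 0).card : ℤ) := by
    exact_mod_cast Finset.card_pos.mpr ⟨e1, by simp [h1i, h1j]⟩
  have c2 : (0:ℤ) < ((univ.filter fun f => U f j ≠ 0 ∧ U f k ≠ 0).card : ℤ) := by
    exact_mod_cast Finset.card_pos.mpr ⟨e2, by simp [h2j, h2k]⟩
  have c3 : (0:ℤ) < ((univ.filter fun f => U f i ≠ 0 ∧ U f k ≠ 0).card : ℤ) := by
    exact_mod_cast Finset.card_pos.mpr ⟨e3, by simp [h3i, h3k]⟩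
  rw [hij, hjk, hki] at hpos
  have hre : U e1 i * U e1 j * ((univ.filter fun f => U f i ≠ 0 ∧ U f j ≠ 0).card : ℤ) *
      (U e2 j * U e2 k * ((univ.filter fun f => U f j ≠ 0 ∧ U f k ≠ 0).card : ℤ)) *
      (U e3 i * U e3 k * ((univ.filter fun f => U f i ≠ 0 ∧ U f k ≠ 0).card : ℤ))
      = (U e1 i * U e1 j * (U e2 j * U e2 k) * (U e3 i * U e3 k)) *
        (((univ.filter fun f => U f i ≠ 0 ∧ U f j ≠ 0).card : ℤ) *
         (((univ.filter fun f => U f j ≠ 0 ∧ U f k ≠ 0).card : ℤ) *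
          ((univ.filter fun f => U f i ≠ 0 ∧ U f k ≠ 0).card : ℤ))) := by ring
  rw [hre, key] at hpos
  nlinarith [mul_pos c1 (mul_pos c2 c3)]

lemma chain (hTU : IsTU U) (S : Finset (Fin s))
    (htri : ∀ h ∈ S, ∀ i ∈ S, ∀ j ∈ S, h ≠ i → i ≠ j → h ≠ j →
      0 ≤ (U.transpose * U) h i * (U.transpose * U) i j * (U.transpose * U) j h)
    (hcard : 2 ≤ S.card) :
    ∃ i ∈ S, ∃ j ∈ S, i ≠ j ∧
      ∀ k ∈ S, ∀ e, U e i ≠ 0 → U e j ≠ 0 → U e k ≠ 0 := by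
  induction S using Finset.induction_on with
  | empty => simp at hcard
  | @insert a S₀ ha IH =>
    by_cases hc0 : S₀.card ≤ 1
    · have hcard' : S₀.card = 1 := by
        rw [Finset.card_insert_of_notMem ha] at hcard; omega
      obtain ⟨b, hb⟩ := Finset.card_eq_one.mp hcard'
      subst hb
      refine ⟨a, by simp, b, by simp, ?_, ?_⟩
      · rintro rfl; exact ha (by simp)
      · intro k hk e hea heb
        rcases Finset.mem_insert.mp hk with rfl | hk
        · exact hea
        · rw [Finset.mem_singleton.mp hk]; exact heb
    · push_neg at hc0
      have htri₀ : ∀ h ∈ S₀, ∀ i ∈ S₀, ∀ j ∈ S₀, h ≠ i → i ≠ j → h ≠ j →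
          0 ≤ (U.transpose * U) h i * (U.transpose * U) i j * (U.transpose * U) j h :=
        fun h hh i hi j hj => htri h (Finset.mem_insert_of_mem hh) i
          (Finset.mem_insert_of_mem hi) j (Finset.mem_insert_of_mem hj)
      obtain ⟨i, hi, j, hj, hij, hprop⟩ := IH htri₀ hc0
      have hia : i ≠ a := fun h => ha (h ▸ hi)
      have hja : j ≠ a := fun h => ha (h ▸ hj)
      have hpos := htri i (Finset.mem_insert_of_mem hi) j (Finset.mem_insert_of_mem hj)
        a (Finset.mem_insert_self a S₀) hij hja hia
      rcases triple_cover hTU hpos with hcase | hcase | hcase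
      · refine ⟨i, Finset.mem_insert_of_mem hi, j, Finset.mem_insert_of_mem hj, hij, ?_⟩
        intro k hk e hei hej
        rcases Finset.mem_insert.mp hk with rfl | hk
        · exact hcase e hei hej
        · exact hprop k hk e hei hej
      · refine ⟨j, Finset.mem_insert_of_mem hj, a, Finset.mem_insert_self a S₀, hja, ?_⟩
        intro k hk e hej hea
        have hei := hcase e hej hea
        rcases Finset.mem_insert.mp hk with rfl | hk
        · exact hea
        · exact hprop k hk e hei hej
      · refine ⟨i, Finset.mem_insert_of_mem hi, a, Finset.mem_insert_self a S₀, hia, ?_⟩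
        intro k hk e hei hea
        have hej := hcase e hei hea
        rcases Finset.mem_insert.mp hk with rfl | hk
        · exact hea
        · exact hprop k hk e hei hej

lemma fA_eq (hTU : IsTU U) (S : Finset (Fin s)) (hS : S.Nonempty) :
    fA (U.transpose * U) S = ((univ.filter fun e => ∀ i ∈ S, U e i ≠ 0).card : ℤ) := by
  unfold fA
  split_ifs with hneg hc1
  · obtain ⟨h, hh, i, hi, j, hj, hhi, hij, hhj, hlt⟩ := hneg
    symm
    have hempty : (univ.filter fun e => ∀ i ∈ S, U e i ≠ 0) = ∅ := by
      rw [Finset.filter_eq_empty_iff]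
      intro e _ hall
      have heh := hall h hh
      have hei := hall i hi
      have hej := hall j hj
      have e1 := A_off hTU heh hei
      have e2 := A_off hTU hei hej
      have e3 := A_off hTU hej heh
      have hcomp : (U.transpose * U) h i * (U.transpose * U) i j * (U.transpose * U) j h
          = (U e h * U e i * U e j)^2 *
            (((univ.filter fun f => U f h ≠ 0 ∧ U f i ≠ 0).card : ℤ) *
             (((univ.filter fun f => U f i ≠ 0 ∧ U f j ≠ 0).card : ℤ) *
              ((univ.filter fun f => U f j ≠ 0 ∧ U f h ≠ 0).card : ℤ))) := by
        rw [e1, e2, e3]; ring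
      have hge : 0 ≤ (U.transpose * U) h i * (U.transpose * U) i j * (U.transpose * U) j h := by
        rw [hcomp]; positivity
      linarith
    rw [hempty]; simp
  · obtain ⟨x, rfl⟩ := Finset.card_eq_one.mp (le_antisymm hc1 (Finset.card_pos.mpr hS))
    rw [Finset.sum_singleton, A_diag hTU]
    have : (univ.filter fun e => ∀ i ∈ ({x} : Finset (Fin s)), U e i ≠ 0)
        = (univ.filter fun e => U e x ≠ 0) := by
      ext e; simp
    rw [this]
  · push_neg at hc1
    have htri : ∀ h ∈ S, ∀ i ∈ S, ∀ j ∈ S, h ≠ i → i ≠ j → h ≠ j →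
        0 ≤ (U.transpose * U) h i * (U.transpose * U) i j * (U.transpose * U) j h := by
      intro h hh i hi j hj h1 h2 h3
      by_contra hlt
      push_neg at hlt
      exact absurd ⟨h, hh, i, hi, j, hj, h1, h2, h3, hlt⟩ hneg
    obtain ⟨i, hi, j, hj, hij, hprop⟩ := chain hTU S htri hc1
    have hsub1 : (univ.filter fun e => ∀ k ∈ S, U e k ≠ 0)
        ⊆ (univ.filter fun f => U f i ≠ 0 ∧ U f j ≠ 0) := by
      intro e he
      rw [Finset.mem_filter] at he ⊢
      exact ⟨he.1, he.2 i hi, he.2 j hj⟩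
    have hsub2 : (univ.filter fun f => U f i ≠ 0 ∧ U f j ≠ 0)
        ⊆ (univ.filter fun e => ∀ k ∈ S, U e k ≠ 0) := by
      intro e he
      rw [Finset.mem_filter] at he ⊢
      exact ⟨he.1, fun k hk => hprop k hk e he.2.1 he.2.2⟩
    have heq : (univ.filter fun f => U f i ≠ 0 ∧ U f j ≠ 0)
        = (univ.filter fun e => ∀ k ∈ S, U e k ≠ 0) :=
      Finset.Subset.antisymm hsub2 hsub1
    apply le_antisymm
    · have hmem : (i, j) ∈ S.offDiag := Finset.mem_offDiag.mpr ⟨hi, hj, hij⟩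
      have h1 := Finset.inf'_le (s := S.offDiag)
        (f := fun p : Fin s × Fin s => |(U.transpose * U) p.1 p.2|) hmem
      refine h1.trans (le_of_eq ?_)
      show |(U.transpose * U) i j| = _
      rw [abs_A_off hTU, heq]
    · apply Finset.le_inf'
      rintro ⟨p, q⟩ hpq
      rw [Finset.mem_offDiag] at hpq
      rw [abs_A_off hTU]
      have : (univ.filter fun e => ∀ k ∈ S, U e k ≠ 0)
          ⊆ (univ.filter fun f => U f p ≠ 0 ∧ U f q ≠ 0) := by
        intro e he
        rw [Finset.mem_filter] at he ⊢
        exact ⟨he.1, he.2 p hpq.1, he.2 q hpq.2.1⟩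
      exact_mod_cast Finset.card_le_card this

end Aux

open Finset in
open scoped Classical in
/-- If `U` is TU then `A = UᵀU` is `g`-nonnegative: `g_A(S) ≥ 0` for every nonempty `S`. -/
theorem stmt14 {E : Type*} [Fintype E] {s : ℕ}
    (U : Matrix E (Fin s) ℤ) (hTU : IsTU U)
    (A : Matrix (Fin s) (Fin s) ℤ) (hA : A = U.transpose * U)
    (S : Finset (Fin s)) (hS : S.Nonempty) :
    0 ≤ gA A S := by
  subst hA
  unfold gA
  have hstep : ∀ S' ∈ Finset.univ.powerset.filter (fun S' => S ⊆ S'),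
      (-1:ℤ) ^ (S' \ S).card * fA (U.transpose * U) S'
      = ∑ e : E, (-1:ℤ) ^ (S' \ S).card * (if ∀ i ∈ S', U e i ≠ 0 then 1 else 0) := by
    intro S' hS'
    rw [Finset.mem_filter] at hS'
    rw [fA_eq hTU S' (hS.mono hS'.2), ← Finset.mul_sum]
    congr 1
    convert (Finset.sum_boole (R := ℤ) (fun e => ∀ i ∈ S', U e i ≠ 0) univ).symm
  rw [Finset.sum_congr rfl hstep, Finset.sum_comm]
  apply Finset.sum_nonneg
  intro e _
  set T : Finset (Fin s) := univ.filter (fun i => U e i ≠ 0) with hT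
  have hcond : ∀ S' : Finset (Fin s), (∀ i ∈ S', U e i ≠ 0) ↔ S' ⊆ T := by
    intro S'
    constructor
    · intro h i hi; rw [hT, Finset.mem_filter]; exact ⟨Finset.mem_univ i, h i hi⟩
    · intro h i hi; have := h hi; rw [hT, Finset.mem_filter] at this; exact this.2
  by_cases hST : S ⊆ T
  · have : ∑ S' ∈ Finset.univ.powerset.filter (fun S' => S ⊆ S'),
        (-1:ℤ) ^ (S' \ S).card * (if ∀ i ∈ S', U e i ≠ 0 then 1 else 0)
        = ∑ X ∈ (T \ S).powerset, (-1:ℤ) ^ X.card := by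
      simp only [mul_ite, mul_one, mul_zero]
      rw [← Finset.sum_filter]
      apply Finset.sum_nbij' (fun S' => S' \ S) (fun X => S ∪ X)
      · intro S' hmem
        simp only [Finset.mem_filter, Finset.mem_powerset] at hmem
        obtain ⟨⟨_, hSS'⟩, hcnd⟩ := hmem
        rw [Finset.mem_powerset]
        exact Finset.sdiff_subset_sdiff ((hcond S').mp hcnd) (le_refl S)
      · intro X hX
        rw [Finset.mem_powerset] at hX
        simp only [Finset.mem_filter, Finset.mem_powerset]
        refine ⟨⟨Finset.subset_univ _, Finset.subset_union_left⟩, ?_⟩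
        rw [hcond]
        exact Finset.union_subset hST (hX.trans (Finset.sdiff_subset))
      · intro S' hmem
        simp only [Finset.mem_filter, Finset.mem_powerset] at hmem
        exact Finset.union_sdiff_of_subset hmem.1.2
      · intro X hX
        rw [Finset.mem_powerset] at hX
        apply Finset.union_sdiff_cancel_left
        exact Finset.disjoint_left.mpr fun a haS haX =>
          (Finset.mem_sdiff.mp (hX haX)).2 haS
      · intro S' _; rfl
    rw [this, Finset.sum_powerset_neg_one_pow_card]
    split_ifs <;> norm_num
  · apply le_of_eq
    symm
    apply Finset.sum_eq_zero
    intro S' hS'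
    rw [Finset.mem_filter, Finset.mem_powerset] at hS'
    have : ¬ (∀ i ∈ S', U e i ≠ 0) := by
      rw [hcond]
      intro h
      exact hST (hS'.2.trans h)
    rw [if_neg this, mul_zero]
end
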